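/- Let ρ₁, ρ₂, ρ₃ be complex numbers with ρ₁ + ρ₂ + ρ₃ = 0, and set τ₁ = ρ₂·conj(ρ₃), τ₂ = ρ₃·conj(ρ₁), τ₃ = ρ₁·conj(ρ₂). Then Im(τ₁) = Im(τ₂) = Im(τ₃), and setting κᵢ = −(1/2)Re(τᵢ) for i = 1,2,3 and κ = −(1/2)Im(τ₃), one has |ρᵢ|² = 2(κⱼ + κₖ) for every permutation {i,j,k} = {1,2,3}, and κ² = κ₁κ₂ + κ₂κ₃ + κ₃κ₁. -/

import Mathlib

/-- The κ-parametrization of the Bel–Robinson eigenvalues: with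
`τ₁ = ρ₂·conj ρ₃`, `τ₂ = ρ₃·conj ρ₁`, `τ₃ = ρ₁·conj ρ₂`, all three `τᵢ` have the
same imaginary part; setting `κᵢ = −(1/2)Re τᵢ` and `κ = −(1/2)Im τ₃`, one has
`tᵢ = |ρᵢ|² = 2(κⱼ + κₖ)` and `κ² = κ₁κ₂ + κ₂κ₃ + κ₃κ₁`. -/
theorem belRobinson_kappa_parametrization (ρ₁ ρ₂ ρ₃ : ℂ) (hsum : ρ₁ + ρ₂ + ρ₃ = 0)
    (τ₁ τ₂ τ₃ : ℂ)
    (hτ₁ : τ₁ = ρ₂ * (starRingEnd ℂ) ρ₃)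
    (hτ₂ : τ₂ = ρ₃ * (starRingEnd ℂ) ρ₁)
    (hτ₃ : τ₃ = ρ₁ * (starRingEnd ℂ) ρ₂)
    (κ₁ κ₂ κ₃ κ : ℝ)
    (hκ₁ : κ₁ = -(1/2) * τ₁.re) (hκ₂ : κ₂ = -(1/2) * τ₂.re) (hκ₃ : κ₃ = -(1/2) * τ₃.re)
    (hκ : κ = -(1/2) * τ₃.im) :
    (τ₁.im = τ₂.im ∧ τ₂.im = τ₃.im) ∧
    ‖ρ₁‖ ^ 2 = 2 * (κ₂ + κ₃) ∧
    ‖ρ₂‖ ^ 2 = 2 * (κ₃ + κ₁) ∧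
    ‖ρ₃‖ ^ 2 = 2 * (κ₁ + κ₂) ∧
    κ ^ 2 = κ₁ * κ₂ + κ₂ * κ₃ + κ₃ * κ₁ := by
  have h3 : ρ₃ = -ρ₁ - ρ₂ := by linear_combination hsum
  subst hτ₁ hτ₂ hτ₃ hκ₁ hκ₂ hκ₃ hκ h3
  simp only [Complex.sq_norm, Complex.normSq_apply, Complex.mul_re, Complex.mul_im,
    Complex.conj_re, Complex.conj_im, Complex.sub_re, Complex.sub_im, Complex.neg_re,
    Complex.neg_im]
  refine ⟨⟨by ring, by ring⟩, by ring, by ring, by ring, by ring⟩
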